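/- Let H be a finite simple graph with at least 2 vertices. If H admits a rank-decomposition of width at most k, then there exists a balanced partition (A,B) of V(H), i.e. with |A| ≥ |V(H)|/3 and |B| ≥ |V(H)|/3, such that cutrank_H(A,B) ≤ k. -/

import Mathlib

open Classical

namespace RankAux

open SimpleGraph Finset

variable {W : Type*} [Fintype W] [DecidableEq W] {T : SimpleGraph W}

noncomputable def tside (T : SimpleGraph W) (u v : W) : Finset W :=
  Finset.univ.filter fun z => (T.deleteEdges {s(u, v)}).Reachable z u

lemma mem_tside {u v z : W} :
    z ∈ tside T u v ↔ (T.deleteEdges {s(u, v)}).Reachable z u := by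
  simp [tside]

lemma reach_or_aux {u v : W} :
    ∀ {a b : W} (_ : T.Walk a b),
      ((T.deleteEdges {s(u, v)}).Reachable b u ∨ (T.deleteEdges {s(u, v)}).Reachable b v) →
      ((T.deleteEdges {s(u, v)}).Reachable a u ∨ (T.deleteEdges {s(u, v)}).Reachable a v) := by
  intro a b p
  induction p with
  | nil => exact id
  | cons h q ih =>
    intro hb
    rename_i a c b
    by_cases he : s(a, c) = s(u, v)
    · rw [Sym2.eq_iff] at he
      rcases he with ⟨rfl, rfl⟩ | ⟨rfl, rfl⟩
      · exact Or.inl Reachable.rfl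
      · exact Or.inr Reachable.rfl
    · have hadj : (T.deleteEdges {s(u, v)}).Adj a c :=
        SimpleGraph.deleteEdges_adj.mpr ⟨h, by simpa using he⟩
      rcases ih hb with h' | h'
      · exact Or.inl (hadj.reachable.trans h')
      · exact Or.inr (hadj.reachable.trans h')

lemma reach_or (hT : T.Preconnected) {u v : W} (z : W) :
    (T.deleteEdges {s(u, v)}).Reachable z u ∨ (T.deleteEdges {s(u, v)}).Reachable z v := by
  obtain ⟨p⟩ := hT z u
  exact reach_or_aux p (Or.inl Reachable.rfl)

lemma not_reach (hT : T.IsAcyclic) {u v : W} (huv : T.Adj u v) :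
    ¬ (T.deleteEdges {s(u, v)}).Reachable u v := by
  have hb := isAcyclic_iff_forall_adj_isBridge.mp hT huv
  rw [isBridge_iff] at hb
  exact hb

lemma reach_iff (hT : T.IsTree) {u v z : W} (huv : T.Adj u v)
    (p : T.Walk z u) (hp : p.IsPath) :
    (T.deleteEdges {s(u, v)}).Reachable z u ↔ s(u, v) ∉ p.edges := by
  constructor
  · rintro ⟨q⟩
    have hq : ∀ e ∈ q.edges, e ∈ T.edgeSet := by
      intro e he
      have h2 := q.edges_subset_edgeSet he
      rw [SimpleGraph.edgeSet_deleteEdges] at h2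
      exact h2.1
    have hq2 : s(u, v) ∉ q.edges := by
      intro hmem
      have h2 := q.edges_subset_edgeSet hmem
      rw [SimpleGraph.edgeSet_deleteEdges] at h2
      exact h2.2 rfl
    obtain ⟨p₀, -, hun⟩ := hT.existsUnique_path z u
    have h1 : p = p₀ := hun p hp
    have h2 : (q.transfer T hq).bypass = p₀ := hun _ ((q.transfer T hq).bypass_isPath)
    intro hmem
    apply hq2
    have h3 : s(u, v) ∈ (q.transfer T hq).bypass.edges := by
      rw [h2, ← h1]; exact hmem
    have h4 := (q.transfer T hq).edges_bypass_subset h3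
    rwa [Walk.edges_transfer] at h4
  · intro h
    refine ⟨p.transfer _ ?_⟩
    intro e he
    rw [SimpleGraph.edgeSet_deleteEdges]
    refine ⟨p.edges_subset_edgeSet he, ?_⟩
    intro hee
    rw [Set.mem_singleton_iff] at hee
    exact h (hee ▸ he)

lemma tside_subset (hT : T.IsTree) {u v w : W} (huv : T.Adj u v) (hvw : T.Adj v w)
    (hne : w ≠ u) : tside T w v ⊆ tside T v u := by
  intro z hz
  rw [mem_tside] at hz ⊢
  obtain ⟨p, hp, -⟩ := hT.existsUnique_path z w
  have hpe : s(w, v) ∉ p.edges := (reach_iff hT hvw.symm p hp).mp hz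
  have hvsup : v ∉ p.support := by
    intro hv
    have hd : (p.dropUntil v hv).IsPath := hp.dropUntil hv
    have hone : (Walk.cons hvw Walk.nil : T.Walk v w).IsPath := by
      simp [Walk.cons_isPath_iff, hvw.ne]
    obtain ⟨p₀, -, hun⟩ := hT.existsUnique_path v w
    have heq : p.dropUntil v hv = Walk.cons hvw Walk.nil :=
      (hun _ hd).trans (hun _ hone).symm
    have hmem : s(v, w) ∈ (p.dropUntil v hv).edges := by
      rw [heq]; simp
    have hmem2 := p.edges_dropUntil_subset hv hmem
    rw [Sym2.eq_swap] at hmem2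
    exact hpe hmem2
  have hq : (Walk.cons hvw p.reverse : T.Walk v z).IsPath :=
    hp.reverse.cons (by simpa [Walk.support_reverse] using hvsup)
  have hnmem : s(v, u) ∉ (Walk.cons hvw p.reverse : T.Walk v z).reverse.edges := by
    rw [Walk.edges_reverse, List.mem_reverse]
    simp only [Walk.edges_cons, List.mem_cons]
    rintro (hee | hee)
    · rw [Sym2.eq_iff] at hee
      rcases hee with ⟨-, h2⟩ | ⟨h1, -⟩
      · exact hne h2.symm
      · subst h1; exact hvw.ne rfl
    · have hvv := Walk.fst_mem_support_of_mem_edges _ hee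
      rw [Walk.support_reverse, List.mem_reverse] at hvv
      exact hvsup hvv
  exact (reach_iff hT huv.symm _ hq.reverse).mpr hnmem

lemma exists_step (hT : T.IsTree) {u v z : W} (huv : T.Adj u v)
    (hz : z ∈ tside T v u) (hne : z ≠ v) :
    ∃ w, T.Adj v w ∧ w ≠ u ∧ z ∈ tside T w v := by
  rw [mem_tside] at hz
  obtain ⟨q, hq, -⟩ := hT.existsUnique_path v z
  have hqe : s(v, u) ∉ q.edges := by
    have h1 := (reach_iff hT huv.symm q.reverse hq.reverse).mp hz
    rwa [Walk.edges_reverse, List.mem_reverse] at h1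
  cases q with
  | nil => exact absurd rfl hne
  | cons h q' =>
    rename_i w
    refine ⟨w, h, ?_, ?_⟩
    · rintro rfl
      exact hqe (by simp)
    · rw [mem_tside]
      have hq' : q'.IsPath := ((Walk.cons_isPath_iff _ _).mp hq).1
      have hvs : v ∉ q'.support := ((Walk.cons_isPath_iff _ _).mp hq).2
      refine (reach_iff hT h.symm q'.reverse hq'.reverse).mpr ?_
      intro hmem
      rw [Walk.edges_reverse, List.mem_reverse] at hmem
      exact hvs (Walk.snd_mem_support_of_mem_edges _ hmem)

lemma mem_tside_self {u v : W} : v ∈ tside T v u :=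
  mem_tside.mpr Reachable.rfl

lemma tside_subset_singleton (hT : T.IsTree) {u v : W} (huv : T.Adj u v)
    (hdeg : T.degree v = 1) : tside T v u ⊆ {v} := by
  intro z hz
  rw [Finset.mem_singleton]
  by_contra hne
  obtain ⟨w, hvw, hwu, -⟩ := exists_step hT huv hz hne
  have h1 : u ∈ T.neighborFinset v := (SimpleGraph.mem_neighborFinset _ _ _).mpr huv.symm
  have h2 : w ∈ T.neighborFinset v := (SimpleGraph.mem_neighborFinset _ _ _).mpr hvw
  exact hwu (Finset.card_le_one.mp hdeg.le w h2 u h1)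

end RankAux



open Classical

/-- The cutrank of a pair of vertex sets `X`, `Y` in a graph `G`:
the rank over `𝔽₂` of the `X × Y` biadjacency matrix. -/
noncomputable def cutrank {V : Type*} (G : SimpleGraph V) (X Y : Finset V) : ℕ :=
  Matrix.rank (Matrix.of fun (x : X) (y : Y) => if G.Adj x.1 y.1 then (1 : ZMod 2) else 0)


/-- A rank-decomposition of a graph on vertex type `V`: a subcubic tree
together with a bijection from `V` to the leaves (degree-1 vertices) of the tree. -/
structure RankDecomp (V : Type*) [Fintype V] where
  n : ℕ
  tree : SimpleGraph (Fin n)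
  isTree : tree.IsTree
  subcubic : ∀ t : Fin n, tree.degree t ≤ 3
  leaf : V → Fin n
  leafDeg : ∀ v : V, tree.degree (leaf v) = 1
  leafInj : Function.Injective leaf
  leafSurj : ∀ t : Fin n, tree.degree t = 1 → ∃ v : V, leaf v = t

/-- The side of the edge `{u, v}` of the decomposition tree containing `u`:
all vertices of `G` whose leaf lies in the component of `u` after deleting the edge. -/
noncomputable def RankDecomp.side {V : Type*} [Fintype V] (d : RankDecomp V) (u v : Fin d.n) :
    Finset V :=
  Finset.univ.filter fun x => (d.tree.deleteEdges {s(u, v)}).Reachable (d.leaf x) u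

/-- The decomposition `d` has width at most `k` for the graph `G`: every edge of the
tree induces a partition of the vertices of cutrank at most `k`. -/
def RankDecomp.widthLE {V : Type*} [Fintype V] (G : SimpleGraph V) (d : RankDecomp V) (k : ℕ) :
    Prop :=
  ∀ u v : Fin d.n, d.tree.Adj u v → cutrank G (d.side u v) (d.side v u) ≤ k

/-- The rankwidth of `G`: the minimum width of a rank-decomposition of `G`. -/
noncomputable def rankwidth {V : Type*} [Fintype V] (G : SimpleGraph V) : ℕ :=
  sInf {k | ∃ d : RankDecomp V, RankDecomp.widthLE G d k}


open SimpleGraph in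
lemma RankDecomp.mem_side_iff {V : Type*} [Fintype V] (d : RankDecomp V) {u v : Fin d.n} {x : V} :
    x ∈ d.side u v ↔ d.leaf x ∈ RankAux.tside d.tree u v := by
  simp [RankDecomp.side, RankAux.tside]

open SimpleGraph in
lemma RankDecomp.side_partition {V : Type*} [Fintype V] (d : RankDecomp V) {u v : Fin d.n}
    (huv : d.tree.Adj u v) :
    d.side u v ∪ d.side v u = Finset.univ ∧ Disjoint (d.side u v) (d.side v u) := by
  have hswap : d.tree.deleteEdges {s(v, u)} = d.tree.deleteEdges {s(u, v)} := by
    rw [Sym2.eq_swap]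
  have hmem1 : ∀ x : V, x ∈ d.side u v ↔
      (d.tree.deleteEdges {s(u, v)}).Reachable (d.leaf x) u := by
    intro x; simp [RankDecomp.side]
  have hmem2 : ∀ x : V, x ∈ d.side v u ↔
      (d.tree.deleteEdges {s(u, v)}).Reachable (d.leaf x) v := by
    intro x; simp [RankDecomp.side, hswap]
  constructor
  · rw [Finset.eq_univ_iff_forall]
    intro x
    rw [Finset.mem_union, hmem1, hmem2]
    exact RankAux.reach_or d.isTree.isConnected.preconnected (d.leaf x)
  · rw [Finset.disjoint_left]
    intro x hx1 hx2
    rw [hmem1] at hx1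
    rw [hmem2] at hx2
    exact RankAux.not_reach d.isTree.IsAcyclic huv (hx1.symm.trans hx2)

lemma RankDecomp.side_card {V : Type*} [Fintype V] (d : RankDecomp V) {u v : Fin d.n}
    (huv : d.tree.Adj u v) :
    (d.side u v).card + (d.side v u).card = Fintype.card V := by
  obtain ⟨hu, hdis⟩ := d.side_partition huv
  rw [← Finset.card_union_of_disjoint hdis, hu, Finset.card_univ]

open SimpleGraph in
lemma RankDecomp.main_step {V : Type*} [Fintype V] (d : RankDecomp V)
    (hV : 2 ≤ Fintype.card V) :
    ∀ (m : ℕ) (u v : Fin d.n), d.tree.Adj u v →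
      (RankAux.tside d.tree v u).card ≤ m →
      Fintype.card V ≤ 3 * (d.side v u).card →
      ∃ a b, d.tree.Adj a b ∧ Fintype.card V ≤ 3 * (d.side a b).card ∧
        Fintype.card V ≤ 3 * (d.side b a).card := by
  intro m
  induction m with
  | zero =>
    intro u v huv hm _
    have h1 : 0 < (RankAux.tside d.tree v u).card :=
      Finset.card_pos.mpr ⟨v, RankAux.mem_tside_self⟩
    omega
  | succ m ih =>
    intro u v huv hm hbig
    by_cases h1 : Fintype.card V ≤ 3 * (d.side u v).card
    · exact ⟨u, v, huv, h1, hbig⟩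
    push_neg at h1
    have hcard := d.side_card huv
    have h2 : 2 * Fintype.card V < 3 * (d.side v u).card := by omega
    by_cases hdeg : d.tree.degree v = 1
    · have hsub := RankAux.tside_subset_singleton d.isTree huv hdeg
      have hle : (d.side v u).card ≤ 1 := by
        apply Finset.card_le_one.mpr
        intro a ha b hb
        have ha' := Finset.mem_singleton.mp (hsub (d.mem_side_iff.mp ha))
        have hb' := Finset.mem_singleton.mp (hsub (d.mem_side_iff.mp hb))
        exact d.leafInj (ha'.trans hb'.symm)
      omega
    · set N := (d.tree.neighborFinset v).erase u with hN
      have hsub : d.side v u ⊆ N.biUnion (fun w => d.side w v) := by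
        intro x hx
        have hlx : d.leaf x ≠ v := by
          intro h; exact hdeg (h ▸ d.leafDeg x)
        obtain ⟨w, hvw, hwu, hw⟩ :=
          RankAux.exists_step d.isTree huv (d.mem_side_iff.mp hx) hlx
        refine Finset.mem_biUnion.mpr ⟨w, ?_, d.mem_side_iff.mpr hw⟩
        exact Finset.mem_erase.mpr ⟨hwu, (SimpleGraph.mem_neighborFinset _ _ _).mpr hvw⟩
      have hNcard : N.card ≤ 2 := by
        have hu : u ∈ d.tree.neighborFinset v :=
          (SimpleGraph.mem_neighborFinset _ _ _).mpr huv.symm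
        have hdeg3 := d.subcubic v
        rw [hN, Finset.card_erase_of_mem hu, SimpleGraph.card_neighborFinset_eq_degree]
        omega
      have hex : ∃ w ∈ N, Fintype.card V ≤ 3 * (d.side w v).card := by
        by_contra hcon
        push_neg at hcon
        have hsum : (d.side v u).card ≤ ∑ w ∈ N, (d.side w v).card :=
          le_trans (Finset.card_le_card hsub) Finset.card_biUnion_le
        have hsum3 : ∑ w ∈ N, 3 * (d.side w v).card ≤ N.card * (Fintype.card V - 1) := by
          have h5 := Finset.sum_le_card_nsmul N (fun w => 3 * (d.side w v).card)
            (Fintype.card V - 1)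
            (fun w hw => by
              have h6 := hcon w hw
              show 3 * (d.side w v).card ≤ _
              omega)
          simpa [smul_eq_mul] using h5
        have hsum4 : 3 * (d.side v u).card ≤ ∑ w ∈ N, 3 * (d.side w v).card := by
          rw [← Finset.mul_sum]
          exact Nat.mul_le_mul_left 3 hsum
        have hmul : N.card * (Fintype.card V - 1) ≤ 2 * (Fintype.card V - 1) :=
          Nat.mul_le_mul_right _ hNcard
        omega
      obtain ⟨w, hwN, hwbig⟩ := hex
      obtain ⟨hwu, hwnb⟩ := Finset.mem_erase.mp hwN
      have hvw : d.tree.Adj v w := (SimpleGraph.mem_neighborFinset _ _ _).mp hwnb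
      refine ih v w hvw ?_ hwbig
      have hss : RankAux.tside d.tree w v ⊆ RankAux.tside d.tree v u :=
        RankAux.tside_subset d.isTree huv hvw hwu
      have hv1 : v ∈ RankAux.tside d.tree v u := RankAux.mem_tside_self
      have hv2 : v ∉ RankAux.tside d.tree w v := by
        rw [RankAux.mem_tside]
        intro hr
        exact RankAux.not_reach d.isTree.IsAcyclic hvw.symm hr.symm
      have hlt : (RankAux.tside d.tree w v).card < (RankAux.tside d.tree v u).card :=
        Finset.card_lt_card ⟨hss, fun hc => hv2 (hc hv1)⟩
      omega

theorem exists_balanced_cut_of_rankDecomp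
    {V : Type*} [Fintype V] (H : SimpleGraph V) (hV : 2 ≤ Fintype.card V)
    (k : ℕ) (d : RankDecomp V) (hd : RankDecomp.widthLE H d k) :
    ∃ A B : Finset V, A ∪ B = Finset.univ ∧ Disjoint A B ∧
      Fintype.card V ≤ 3 * A.card ∧ Fintype.card V ≤ 3 * B.card ∧
      cutrank H A B ≤ k := by
  have hn : 2 ≤ d.n := by
    have := Fintype.card_le_of_injective d.leaf d.leafInj
    simp only [Fintype.card_fin] at this
    omega
  obtain ⟨a, b, hab⟩ := Fintype.exists_pair_of_one_lt_card
    (α := Fin d.n) (by simp; omega)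
  obtain ⟨p⟩ := d.isTree.isConnected.preconnected a b
  have hedge : ∃ u v, d.tree.Adj u v := by
    cases p with
    | nil => exact absurd rfl hab
    | cons h q => exact ⟨_, _, h⟩
  obtain ⟨u, v, huv⟩ := hedge
  have hcard := d.side_card huv
  have htb : ∀ (x y : Fin d.n), (RankAux.tside d.tree x y).card ≤ d.n := fun x y => by
    have := Finset.card_le_univ (RankAux.tside d.tree x y)
    simpa using this
  have hmain : ∃ a b, d.tree.Adj a b ∧ Fintype.card V ≤ 3 * (d.side a b).card ∧
      Fintype.card V ≤ 3 * (d.side b a).card := by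
    by_cases hb : Fintype.card V ≤ 3 * (d.side v u).card
    · exact d.main_step hV d.n u v huv (htb _ _) hb
    · exact d.main_step hV d.n v u huv.symm (htb _ _) (by omega)
  obtain ⟨a', b', hab', h1, h2⟩ := hmain
  obtain ⟨hun, hdis⟩ := d.side_partition hab'
  exact ⟨d.side a' b', d.side b' a', hun, hdis, h1, h2, hd a' b' hab'⟩
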